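/- Let G be a finite connected simple graph with n vertices and m edges, w : D(G) → ℍ an arc weight, and W, B_w, J₀, D_w as below. Then for every t ∈ ℂ, det(I_{4m} − t·ψ(ᵀB_w − J₀)) = (1 − t²)^{2m−2n} · det(I_{2n} − t·ψ(ᵀW) + t²·(ψ(D_w) − I_{2n})). -/

import Mathlib

noncomputable section

open Matrix

/-- Simplex part of a quaternion: `q = Sc q + j * Pc q`. -/
def Sc (q : Quaternion ℝ) : ℂ := ⟨q.re, q.imI⟩

/-- Perplex part of a quaternion: `q = Sc q + j * Pc q`. -/
def Pc (q : Quaternion ℝ) : ℂ := ⟨q.imJ, -q.imK⟩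

/-- The map ψ sending a quaternionic matrix `M = M^S + j·M^P` (symplectic decomposition)
to the complex block matrix `[[M^S, -conj(M^P)], [M^P, conj(M^S)]]`. -/
def psi {I J : Type*} (M : Matrix I J (Quaternion ℝ)) :
    Matrix (I ⊕ I) (J ⊕ J) ℂ :=
  Matrix.fromBlocks (M.map Sc) (-((M.map Pc).map (starRingEnd ℂ)))
    (M.map Pc) ((M.map Sc).map (starRingEnd ℂ))

variable {V : Type*}

/-- The quaternionic weighted matrix W: `W u v = w((u,v))` if `(u,v)` is an arc, else 0. -/
def quatWeightMatrix [Fintype V] [DecidableEq V] (G : SimpleGraph V) [DecidableRel G.Adj]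
    (w : G.Dart → Quaternion ℝ) : Matrix V V (Quaternion ℝ) := fun u v =>
  if h : G.Adj u v then w ⟨(u, v), h⟩ else 0

/-- The quaternionic weighted arc matrix B_w: `(B_w) e f = w(f)` if `t(e) = o(f)`, else 0. -/
def quatArcMatrix [Fintype V] [DecidableEq V] (G : SimpleGraph V) [DecidableRel G.Adj]
    (w : G.Dart → Quaternion ℝ) : Matrix G.Dart G.Dart (Quaternion ℝ) := fun e f =>
  if e.toProd.2 = f.toProd.1 then w f else 0

/-- The quaternionic arc-inversion matrix J₀: `(J₀) e f = 1` if `f = e⁻¹`, else 0. -/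
def quatArcInvMatrix [Fintype V] [DecidableEq V] (G : SimpleGraph V) [DecidableRel G.Adj] :
    Matrix G.Dart G.Dart (Quaternion ℝ) := fun e f =>
  if f = e.symm then 1 else 0

/-- The quaternionic weighted degree matrix D_w: diagonal with
`(D_w)_{uu} = Σ_{e : o(e) = u} w(e)`. -/
def quatDegMatrix [Fintype V] [DecidableEq V] (G : SimpleGraph V) [DecidableRel G.Adj]
    (w : G.Dart → Quaternion ℝ) : Matrix V V (Quaternion ℝ) :=
  Matrix.diagonal fun u => ∑ e : G.Dart, if e.toProd.1 = u then w e else 0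

/-- The 2m×n matrix K: `K e v = w(e)` if `o(e) = v`, else 0. -/
def quatKMatrix [Fintype V] [DecidableEq V] (G : SimpleGraph V) [DecidableRel G.Adj]
    (w : G.Dart → Quaternion ℝ) : Matrix G.Dart V (Quaternion ℝ) := fun e v =>
  if e.toProd.1 = v then w e else 0

/-- The 2m×n matrix L: `L e v = 1` if `t(e) = v`, else 0. -/
def quatLMatrix [Fintype V] [DecidableEq V] (G : SimpleGraph V) [DecidableRel G.Adj] :
    Matrix G.Dart V (Quaternion ℝ) := fun e v =>
  if e.toProd.2 = v then 1 else 0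


section AuxQuat

lemma Sc_add (p q : Quaternion ℝ) : Sc (p + q) = Sc p + Sc q := by
  simp [Sc, Complex.ext_iff]

lemma Pc_add (p q : Quaternion ℝ) : Pc (p + q) = Pc p + Pc q := by
  simp [Pc, Complex.ext_iff]; ring

lemma Sc_zero : Sc 0 = 0 := by simp [Sc, Complex.ext_iff, Quaternion.re_zero, Quaternion.imI_zero]
lemma Pc_zero : Pc 0 = 0 := by simp [Pc, Complex.ext_iff, Quaternion.imJ_zero, Quaternion.imK_zero]
lemma Sc_one : Sc 1 = 1 := by simp [Sc, Complex.ext_iff, Quaternion.re_one, Quaternion.imI_one]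
lemma Pc_one : Pc 1 = 0 := by simp [Pc, Complex.ext_iff, Quaternion.imJ_one, Quaternion.imK_one]

lemma Sc_mul (p q : Quaternion ℝ) :
    Sc (p * q) = Sc p * Sc q - (starRingEnd ℂ) (Pc p) * Pc q := by
  simp [Sc, Pc, Complex.ext_iff, Quaternion.re_mul, Quaternion.imI_mul, Complex.mul_re,
    Complex.mul_im]; constructor <;> ring

lemma Pc_mul (p q : Quaternion ℝ) :
    Pc (p * q) = Pc p * Sc q + (starRingEnd ℂ) (Sc p) * Pc q := by
  simp [Sc, Pc, Complex.ext_iff, Quaternion.imJ_mul, Quaternion.imK_mul, Complex.mul_re,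
    Complex.mul_im]; constructor <;> ring

lemma Sc_neg (p : Quaternion ℝ) : Sc (-p) = - Sc p := by simp [Sc, Complex.ext_iff]
lemma Pc_neg (p : Quaternion ℝ) : Pc (-p) = - Pc p := by simp [Pc, Complex.ext_iff]
lemma Sc_sub (p q : Quaternion ℝ) : Sc (p - q) = Sc p - Sc q := by
  simp [sub_eq_add_neg, Sc_add, Sc_neg]
lemma Pc_sub (p q : Quaternion ℝ) : Pc (p - q) = Pc p - Pc q := by
  simp [sub_eq_add_neg, Pc_add, Pc_neg]

def ScHom : Quaternion ℝ →+ ℂ := ⟨⟨Sc, Sc_zero⟩, Sc_add⟩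
def PcHom : Quaternion ℝ →+ ℂ := ⟨⟨Pc, Pc_zero⟩, Pc_add⟩

lemma Sc_sum {ι : Type*} (s : Finset ι) (f : ι → Quaternion ℝ) :
    Sc (∑ x ∈ s, f x) = ∑ x ∈ s, Sc (f x) := map_sum ScHom f s
lemma Pc_sum {ι : Type*} (s : Finset ι) (f : ι → Quaternion ℝ) :
    Pc (∑ x ∈ s, f x) = ∑ x ∈ s, Pc (f x) := map_sum PcHom f s

lemma psi_sub {I J : Type*} (M N : Matrix I J (Quaternion ℝ)) :
    psi (M - N) = psi M - psi N := by
  ext (i|i) (j|j) <;>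
    simp [psi, Matrix.fromBlocks, Sc_sub, Pc_sub, map_sub] <;> ring

lemma psi_one {I : Type*} [DecidableEq I] : psi (1 : Matrix I I (Quaternion ℝ)) = 1 := by
  ext (i|i) (j|j) <;>
    simp [psi, Matrix.fromBlocks, Matrix.one_apply, apply_ite Sc, apply_ite Pc, Sc_one, Pc_one,
      Sc_zero, Pc_zero, apply_ite (starRingEnd ℂ)] <;>
    split <;> simp

lemma psi_mul {I J K : Type*} [Fintype J] (M : Matrix I J (Quaternion ℝ))
    (N : Matrix J K (Quaternion ℝ)) : psi (M * N) = psi M * psi N := by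
  ext (i|i) (k|k) <;>
    simp [psi, Matrix.mul_apply, Matrix.fromBlocks, Fintype.sum_sum_type, Sc_sum, Pc_sum,
      Sc_mul, Pc_mul, map_sum, Finset.sum_sub_distrib, Finset.sum_add_distrib, mul_comm,
      Finset.sum_neg_distrib] <;>
    ring_nf <;>
    simp [Finset.sum_sub_distrib, Finset.sum_add_distrib]

end AuxQuat

section AuxGraph

variable [Fintype V] [DecidableEq V] (G : SimpleGraph V) [DecidableRel G.Adj]
  (w : G.Dart → Quaternion ℝ)

lemma hB : (quatArcMatrix G w)ᵀ = quatKMatrix G w * (quatLMatrix G)ᵀ := by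
  refine Matrix.ext fun e f => ?_
  simp only [Matrix.transpose_apply, Matrix.mul_apply, quatArcMatrix, quatKMatrix, quatLMatrix,
    ite_mul, mul_ite, mul_one, mul_zero, zero_mul]
  rw [Finset.sum_eq_single e.toProd.1]
  · by_cases h : f.toProd.2 = e.toProd.1 <;> simp [h, eq_comm]
  · intro v _ hv; simp [Ne.symm hv]
  · simp

lemma hW : (quatWeightMatrix G w)ᵀ = (quatLMatrix G)ᵀ * quatKMatrix G w := by
  refine Matrix.ext fun u v => ?_
  simp only [Matrix.transpose_apply, Matrix.mul_apply, quatWeightMatrix, quatLMatrix, quatKMatrix,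
    ite_mul, mul_ite, one_mul, mul_zero, zero_mul]
  by_cases h : G.Adj v u
  · rw [dif_pos h, Finset.sum_eq_single (⟨(v, u), h⟩ : G.Dart)]
    · simp
    · intro e _ he
      by_cases h1 : e.toProd.2 = u
      · by_cases h2 : e.toProd.1 = v
        · exact absurd (SimpleGraph.Dart.ext _ _ (Prod.ext h2 h1)) he
        · simp [h1, h2]
      · simp [h1]
    · simp
  · rw [dif_neg h]
    refine (Finset.sum_eq_zero fun e _ => ?_).symm
    by_cases h1 : e.toProd.2 = u
    · by_cases h2 : e.toProd.1 = v
      · exact absurd (by rw [← h2, ← h1]; exact e.adj) h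
      · simp [h1, h2]
    · simp [h1]

lemma hJ : quatArcInvMatrix G * quatArcInvMatrix G = 1 := by
  refine Matrix.ext fun e g => ?_
  simp only [Matrix.mul_apply, quatArcInvMatrix, ite_mul, one_mul, zero_mul]
  rw [Finset.sum_eq_single e.symm]
  · simp [Matrix.one_apply, SimpleGraph.Dart.symm_symm, eq_comm]
  · intro f _ hf; simp [hf]
  · simp

def dartSymmEquiv : G.Dart ≃ G.Dart :=
  ⟨SimpleGraph.Dart.symm, SimpleGraph.Dart.symm, fun d => d.symm_symm, fun d => d.symm_symm⟩

lemma hD : quatDegMatrix G w = (quatLMatrix G)ᵀ * (quatArcInvMatrix G * quatKMatrix G w) := by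
  have hJK : quatArcInvMatrix G * quatKMatrix G w =
      fun e v => if e.toProd.2 = v then w e.symm else 0 := by
    refine Matrix.ext fun e v => ?_
    simp only [Matrix.mul_apply, quatArcInvMatrix, quatKMatrix, ite_mul, one_mul, zero_mul]
    rw [Finset.sum_eq_single e.symm]
    · simp [SimpleGraph.Dart.symm_toProd]
    · intro f _ hf; simp [hf]
    · simp
  rw [hJK]
  refine Matrix.ext fun u v => ?_
  simp only [Matrix.mul_apply, quatDegMatrix, quatLMatrix, Matrix.transpose_apply, ite_mul,
    one_mul, zero_mul, Matrix.diagonal_apply]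
  by_cases h : u = v
  · subst h
    simp only [if_pos rfl]
    rw [← Equiv.sum_comp (dartSymmEquiv G) (fun e => if e.toProd.1 = u then w e else 0)]
    refine Finset.sum_congr rfl fun e _ => ?_
    by_cases h1 : e.toProd.2 = u <;>
      simp [dartSymmEquiv, SimpleGraph.Dart.symm_toProd, h1, quatLMatrix]
  · rw [if_neg h]
    refine (Finset.sum_eq_zero fun e _ => ?_).symm
    by_cases h1 : e.toProd.2 = u
    · by_cases h2 : e.toProd.2 = v
      · exact absurd (h1 ▸ h2 ▸ rfl : u = v) h
      · simp [h1, h2, h]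
    · simp [h1, quatLMatrix]


/-- complex version of the arc-inversion matrix -/
def j0c : Matrix G.Dart G.Dart ℂ := fun e f => if f = e.symm then 1 else 0

def IsPos (d : G.Dart) : Prop :=
  (Fintype.equivFin V) d.toProd.1 < (Fintype.equivFin V) d.toProd.2

instance : DecidablePred (IsPos G) := fun _ => by unfold IsPos; infer_instance

def posDart : Type _ := {d : G.Dart // IsPos G d}

instance : Fintype (posDart G) := by unfold posDart; infer_instance
instance : DecidableEq (posDart G) := by unfold posDart; infer_instance

lemma isPos_symm_iff (d : G.Dart) : IsPos G d.symm ↔ ¬ IsPos G d := by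
  have hne : ((Fintype.equivFin V) d.toProd.1 : ℕ) ≠ (Fintype.equivFin V) d.toProd.2 := by
    simpa [Fin.val_eq_val] using (d.adj.ne ∘ (Fintype.equivFin V).injective)
  unfold IsPos
  rw [SimpleGraph.Dart.symm_toProd]
  simp only [Prod.fst_swap, Prod.snd_swap, Fin.lt_def]
  omega

lemma not_isPos_symm (d : G.Dart) (h : IsPos G d) : ¬ IsPos G d.symm :=
  fun hh => (isPos_symm_iff G d).mp hh h

def dartEquiv : posDart G ⊕ posDart G ≃ G.Dart where
  toFun x := Sum.elim (fun d => d.val) (fun d => d.val.symm) x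
  invFun d :=
    if h : IsPos G d then Sum.inl ⟨d, h⟩
    else Sum.inr ⟨d.symm, (isPos_symm_iff G d).mpr h⟩
  left_inv x := by
    cases x with
    | inl d => simp [d.property]; rfl
    | inr d =>
      have h1 : ¬ IsPos G d.val.symm := not_isPos_symm G d.val d.property
      dsimp only [Sum.elim_inr]
      rw [dif_neg h1]
      exact congrArg Sum.inr (Subtype.ext (SimpleGraph.Dart.symm_symm _))
  right_inv d := by
    by_cases h : IsPos G d
    · simp [h]; rfl
    · dsimp only
      rw [dif_neg h]
      exact SimpleGraph.Dart.symm_symm d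

lemma card_posDart (m : ℕ) (hm : m = G.edgeFinset.card) : Fintype.card (posDart G) = m := by
  have h1 : Fintype.card G.Dart = 2 * G.edgeFinset.card := G.dart_card_eq_twice_card_edges
  have h2 : Fintype.card G.Dart = Fintype.card (posDart G) + Fintype.card (posDart G) := by
    rw [← Fintype.card_sum, Fintype.card_congr (dartEquiv G)]
  omega

lemma j0c_submatrix :
    (j0c G).submatrix (dartEquiv G) (dartEquiv G) =
      Matrix.fromBlocks 0 (1 : Matrix (posDart G) (posDart G) ℂ) 1 0 := by
  ext (d|d) (d'|d') <;>
    simp only [Matrix.submatrix_apply, dartEquiv, Equiv.coe_fn_mk, Sum.elim_inl, Sum.elim_inr,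
      j0c, Matrix.fromBlocks_apply₁₁, Matrix.fromBlocks_apply₁₂, Matrix.fromBlocks_apply₂₁,
      Matrix.fromBlocks_apply₂₂, Matrix.one_apply, Matrix.zero_apply]
  · exact if_neg fun h => not_isPos_symm G d.val d.property (by rw [← h]; exact d'.property)
  · by_cases h : d = d'
    · subst h; simp
    · rw [if_neg h]; refine if_neg ?_
      intro hh
      exact h (Subtype.ext (by
        simpa [SimpleGraph.Dart.symm_symm] using congrArg SimpleGraph.Dart.symm hh.symm))
  · by_cases h : d = d'
    · subst h; simp [SimpleGraph.Dart.symm_symm]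
    · rw [if_neg h]; refine if_neg ?_
      simp only [SimpleGraph.Dart.symm_symm]
      exact fun hh => h (Subtype.ext hh.symm)
  · refine if_neg fun h => ?_
    rw [SimpleGraph.Dart.symm_symm] at h
    exact not_isPos_symm G d'.val d'.property (by rw [h]; exact d.property)

lemma det_one_add_smul_j0c (t : ℂ) (m : ℕ) (hm : m = G.edgeFinset.card) :
    ((1 : Matrix G.Dart G.Dart ℂ) + t • j0c G).det = (1 - t ^ 2) ^ m := by
  rw [← Matrix.det_submatrix_equiv_self (dartEquiv G)]
  have : ((1 : Matrix G.Dart G.Dart ℂ) + t • j0c G).submatrix (dartEquiv G) (dartEquiv G) =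
      Matrix.fromBlocks 1 (t • (1 : Matrix (posDart G) (posDart G) ℂ)) (t • 1) 1 := by
    rw [show ((1 : Matrix G.Dart G.Dart ℂ) + t • j0c G).submatrix (dartEquiv G) (dartEquiv G) =
        (1 : Matrix G.Dart G.Dart ℂ).submatrix (dartEquiv G) (dartEquiv G) +
          t • (j0c G).submatrix (dartEquiv G) (dartEquiv G) from rfl,
      Matrix.submatrix_one_equiv, j0c_submatrix]
    ext (i|i) (j|j) <;> simp [Matrix.fromBlocks, Matrix.one_apply]
  rw [this, Matrix.det_fromBlocks_one₁₁]
  have h2 : (1 : Matrix (posDart G) (posDart G) ℂ) - t • 1 * (t • 1) =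
      (1 - t ^ 2) • 1 := by
    rw [Matrix.smul_mul, Matrix.one_mul, smul_smul, sub_smul, one_smul, sq]
  rw [h2, Matrix.det_smul, Matrix.det_one, mul_one, card_posDart G m hm]


lemma psi_arcInv : psi (quatArcInvMatrix G) = Matrix.fromBlocks (j0c G) 0 0 (j0c G) := by
  ext (e|e) (f|f) <;>
    simp [psi, quatArcInvMatrix, j0c, Matrix.fromBlocks, apply_ite Sc, apply_ite Pc,
      Sc_one, Sc_zero, Pc_one, Pc_zero, apply_ite (starRingEnd ℂ)]

lemma det_one_add_smul_psiJ (t : ℂ) (m : ℕ) (hm : m = G.edgeFinset.card) :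
    ((1 : Matrix (G.Dart ⊕ G.Dart) (G.Dart ⊕ G.Dart) ℂ) + t • psi (quatArcInvMatrix G)).det =
      (1 - t ^ 2) ^ (2 * m) := by
  rw [psi_arcInv]
  have h1 : (1 : Matrix (G.Dart ⊕ G.Dart) (G.Dart ⊕ G.Dart) ℂ) +
      t • Matrix.fromBlocks (j0c G) 0 0 (j0c G) =
      Matrix.fromBlocks (1 + t • j0c G) 0 0 (1 + t • j0c G) := by
    ext (e|e) (f|f) <;> simp [Matrix.fromBlocks, Matrix.one_apply]
  rw [h1, Matrix.det_fromBlocks_zero₂₁, det_one_add_smul_j0c G t m hm, two_mul, pow_add]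

end AuxGraph

/-- Theorem 5.1: for every t ∈ ℂ,
det(I_{4m} − tψ(ᵀB_w − J₀)) = (1−t²)^{2m−2n}·det(I_{2n} − tψ(ᵀW) + t²(ψ(D_w) − I_{2n}))
(stated multiplied through by (1−t²)^{2n} to avoid negative exponents). -/
theorem quat_det_formula [Fintype V] [DecidableEq V] (G : SimpleGraph V)
    [DecidableRel G.Adj] (hG : G.Connected) (n m : ℕ) (hn : n = Fintype.card V)
    (hm : m = G.edgeFinset.card) (w : G.Dart → Quaternion ℝ) :
    ∀ t : ℂ,
      (1 - t ^ 2) ^ (2 * n) *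
          ((1 : Matrix (G.Dart ⊕ G.Dart) (G.Dart ⊕ G.Dart) ℂ) -
            t • psi ((quatArcMatrix G w)ᵀ - quatArcInvMatrix G)).det =
        (1 - t ^ 2) ^ (2 * m) *
          ((1 : Matrix (V ⊕ V) (V ⊕ V) ℂ) - t • psi ((quatWeightMatrix G w)ᵀ) +
            t ^ 2 • (psi (quatDegMatrix G w) - 1)).det := by
  intro t
  have f1 : psi ((quatArcMatrix G w)ᵀ - quatArcInvMatrix G) =
      psi (quatKMatrix G w) * psi ((quatLMatrix G)ᵀ) - psi (quatArcInvMatrix G) := by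
    rw [psi_sub, hB G w, psi_mul]
  have f2 : psi ((quatWeightMatrix G w)ᵀ) = psi ((quatLMatrix G)ᵀ) * psi (quatKMatrix G w) := by
    rw [hW G w, psi_mul]
  have f3 : psi (quatDegMatrix G w) =
      psi ((quatLMatrix G)ᵀ) * (psi (quatArcInvMatrix G) * psi (quatKMatrix G w)) := by
    rw [hD G w, psi_mul, psi_mul]
  have f4 : psi (quatArcInvMatrix G) * psi (quatArcInvMatrix G) = 1 := by
    rw [← psi_mul, hJ G, psi_one]
  set jj := psi (quatArcInvMatrix G)
  set kk := psi (quatKMatrix G w)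
  set llt := psi ((quatLMatrix G)ᵀ)
  set ww := psi ((quatWeightMatrix G w)ᵀ)
  set dd := psi (quatDegMatrix G w)
  have cardβ : Fintype.card (G.Dart ⊕ G.Dart) = 2 * (2 * m) := by
    simp only [Fintype.card_sum, G.dart_card_eq_twice_card_edges, hm]
    ring
  have cardα : Fintype.card (V ⊕ V) = 2 * n := by
    simp only [Fintype.card_sum, hn]
    ring
  have hn1 : 1 ≤ n := by
    rw [hn]
    exact Fintype.card_pos_iff.mpr hG.nonempty
  by_cases h : (1 : ℂ) - t ^ 2 = 0
  · -- degenerate case t² = 1 : both sides vanish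
    rw [h, zero_pow (by omega : 2 * n ≠ 0), zero_mul]
    rcases Nat.eq_zero_or_pos m with hm0 | hm0
    · -- no edges : the RHS matrix is (1 - t²) • 1
      have hnoadj : ∀ u v : V, ¬ G.Adj u v := by
        intro u v huv
        have h1 : s(u, v) ∈ G.edgeFinset := by
          rw [SimpleGraph.mem_edgeFinset]
          exact huv
        have h2 : 0 < G.edgeFinset.card := Finset.card_pos.mpr ⟨_, h1⟩
        omega
      have hW0 : ww = 0 := by
        have : (quatWeightMatrix G w)ᵀ = 0 := by
          refine Matrix.ext fun u v => ?_
          simp [quatWeightMatrix, hnoadj v u]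
        show psi _ = 0
        rw [this]
        ext (i|i) (j|j) <;> simp [psi, Sc_zero, Pc_zero, Matrix.fromBlocks]
      have hDartEmpty : IsEmpty G.Dart := by
        rw [← Fintype.card_eq_zero_iff, G.dart_card_eq_twice_card_edges]
        omega
      have hD0 : dd = 0 := by
        have : quatDegMatrix G w = 0 := by
          refine Matrix.ext fun u v => ?_
          simp [quatDegMatrix, Matrix.diagonal_apply, Finset.univ_eq_empty]
        show psi _ = 0
        rw [this]
        ext (i|i) (j|j) <;> simp [psi, Sc_zero, Pc_zero, Matrix.fromBlocks]
      have hmat : (1 : Matrix (V ⊕ V) (V ⊕ V) ℂ) - t • ww + t ^ 2 • (dd - 1) =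
          (1 - t ^ 2) • 1 := by
        rw [hW0, hD0, smul_zero, sub_zero, zero_sub, smul_neg, sub_smul, one_smul,
          sub_eq_add_neg]
      rw [hmat, Matrix.det_smul, Matrix.det_one, cardα, hm0, h,
        zero_pow (by omega : 2 * n ≠ 0)]
      norm_num
    · rw [zero_pow (by omega : 2 * m ≠ 0), zero_mul]
  · -- main case t² ≠ 1
    set c : ℂ := t / (1 - t ^ 2) with hc
    have hct : (1 - t ^ 2) * c = t := by
      rw [hc, mul_comm, div_mul_cancel₀ _ h]
    have hdetj : ((1 : Matrix (G.Dart ⊕ G.Dart) (G.Dart ⊕ G.Dart) ℂ) - t • jj).det =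
        (1 - t ^ 2) ^ (2 * m) := by
      have h2 := det_one_add_smul_psiJ G (-t) m hm
      rw [neg_smul, ← sub_eq_add_neg, neg_sq] at h2
      exact h2
    have M1 : ((1 : Matrix (G.Dart ⊕ G.Dart) (G.Dart ⊕ G.Dart) ℂ) - t • jj) *
        (1 - t • (kk * llt - jj)) =
        (1 - t ^ 2) • 1 - t • ((1 - t • jj) * (kk * llt)) := by
      simp only [Matrix.mul_sub, Matrix.sub_mul, Matrix.mul_smul, Matrix.smul_mul,
        Matrix.mul_one, Matrix.one_mul, smul_sub, smul_smul, f4, sub_smul, one_smul]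
      module
    have E2 : (1 - t ^ 2) • ((1 : Matrix (G.Dart ⊕ G.Dart) (G.Dart ⊕ G.Dart) ℂ) +
        ((-c) • ((1 - t • jj) * kk)) * llt) =
        (1 - t ^ 2) • 1 - t • ((1 - t • jj) * (kk * llt)) := by
      rw [smul_add, Matrix.smul_mul, smul_smul, mul_neg, hct, neg_smul, ← sub_eq_add_neg,
        Matrix.mul_assoc]
    have key1 : (1 - t ^ 2) ^ (2 * m) *
        ((1 : Matrix (G.Dart ⊕ G.Dart) (G.Dart ⊕ G.Dart) ℂ) - t • (kk * llt - jj)).det =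
        ((1 - t ^ 2) • ((1 : Matrix (G.Dart ⊕ G.Dart) (G.Dart ⊕ G.Dart) ℂ) +
          ((-c) • ((1 - t • jj) * kk)) * llt)).det := by
      rw [← hdetj, ← Matrix.det_mul, M1, E2]
    have key2 : ((1 - t ^ 2) • ((1 : Matrix (G.Dart ⊕ G.Dart) (G.Dart ⊕ G.Dart) ℂ) +
        ((-c) • ((1 - t • jj) * kk)) * llt)).det =
        (1 - t ^ 2) ^ (2 * m) * ((1 - t ^ 2) ^ (2 * m) *
          ((1 : Matrix (V ⊕ V) (V ⊕ V) ℂ) + llt * ((-c) • ((1 - t • jj) * kk))).det) := by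
      rw [Matrix.det_smul, cardβ, Matrix.det_one_add_mul_comm,
        show 2 * (2 * m) = 2 * m + 2 * m from by ring, pow_add, mul_assoc]
    have hMα : (1 : Matrix (V ⊕ V) (V ⊕ V) ℂ) + llt * ((-c) • ((1 - t • jj) * kk)) =
        1 - c • ww + (c * t) • dd := by
      rw [f2, f3]
      simp only [Matrix.mul_smul, Matrix.sub_mul, Matrix.mul_sub, Matrix.smul_mul,
        Matrix.one_mul, smul_sub, smul_smul, neg_smul, mul_neg, neg_mul, Matrix.mul_neg, Matrix.neg_mul, Matrix.mul_assoc]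
      module
    have hRmat : (1 : Matrix (V ⊕ V) (V ⊕ V) ℂ) - t • ww + t ^ 2 • (dd - 1) =
        (1 - t ^ 2) • ((1 : Matrix (V ⊕ V) (V ⊕ V) ℂ) - c • ww + (c * t) • dd) := by
      simp only [smul_add, smul_sub, smul_smul, ← mul_assoc, hct]
      module
    refine mul_left_cancel₀ (pow_ne_zero (2 * m) h) ?_
    rw [f1]
    calc (1 - t ^ 2) ^ (2 * m) * ((1 - t ^ 2) ^ (2 * n) *
          ((1 : Matrix (G.Dart ⊕ G.Dart) (G.Dart ⊕ G.Dart) ℂ) - t • (kk * llt - jj)).det)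
        = (1 - t ^ 2) ^ (2 * n) * ((1 - t ^ 2) ^ (2 * m) *
          ((1 : Matrix (G.Dart ⊕ G.Dart) (G.Dart ⊕ G.Dart) ℂ) - t • (kk * llt - jj)).det) := by
          ring
      _ = (1 - t ^ 2) ^ (2 * n) * ((1 - t ^ 2) ^ (2 * m) * ((1 - t ^ 2) ^ (2 * m) *
          ((1 : Matrix (V ⊕ V) (V ⊕ V) ℂ) - c • ww + (c * t) • dd).det)) := by
          rw [key1, key2, hMα]
      _ = (1 - t ^ 2) ^ (2 * m) * ((1 - t ^ 2) ^ (2 * m) * ((1 - t ^ 2) ^ (2 * n) *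
          ((1 : Matrix (V ⊕ V) (V ⊕ V) ℂ) - c • ww + (c * t) • dd).det)) := by
          ring
      _ = (1 - t ^ 2) ^ (2 * m) * ((1 - t ^ 2) ^ (2 * m) *
          ((1 - t ^ 2) • ((1 : Matrix (V ⊕ V) (V ⊕ V) ℂ) - c • ww + (c * t) • dd)).det) := by
          rw [Matrix.det_smul, cardα]
      _ = (1 - t ^ 2) ^ (2 * m) * ((1 - t ^ 2) ^ (2 * m) *
          ((1 : Matrix (V ⊕ V) (V ⊕ V) ℂ) - t • ww + t ^ 2 • (dd - 1)).det) := by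
          rw [hRmat]
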